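/- Consider the unfair divisible sandpile started from an initial configuration ν₀ with finite total mass M and bounded support, and let T be a legal toppling scheme for ν₀. Then as k → ∞ the odometers u_k and the configurations ν_k converge pointwise to limits u and ν; the limiting configuration satisfies ν(x) ≤ 1 for every x ∈ ℤ^d, and the mass relation ν = ν₀ + 𝒦u holds. -/

import Mathlib

open MeasureTheory Filter Real
open scoped Classical

noncomputable section

/-- The lattice ℤ^d, viewed as ℤ^{d-1} (space) × ℤ (drift direction). -/
abbrev LatZ (d : ℕ) := (Fin (d-1) → ℤ) × ℤ

/-- The fraction of toppled mass sent from `x` to `y`: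
`p` to `x + e_d`, `(1-p)/(2(d-1))` to each `x ± e_i`, `0` otherwise. -/
def nbrWeight (d : ℕ) (p : ℝ) (x y : LatZ d) : ℝ :=
  (if y = (x.1, x.2 + 1) then p else 0) +
  ((1 - p) / (2 * ((d : ℝ) - 1))) *
    ∑ i : Fin (d-1),
      ((if y = (Function.update x.1 i (x.1 i + 1), x.2) then (1:ℝ) else 0) +
       (if y = (Function.update x.1 i (x.1 i - 1), x.2) then (1:ℝ) else 0))

/-- Toppling a site: a full site keeps mass 1 and distributes the excess to its
neighbors according to `nbrWeight`; toppling a non-full site does nothing. -/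
def topple (d : ℕ) (p : ℝ) (ν : LatZ d → ℝ) (x : LatZ d) : LatZ d → ℝ :=
  if 1 ≤ ν x then
    fun y => (if y = x then 1 else ν y) + (ν x - 1) * nbrWeight d p x y
  else ν

/-- The configuration after the first `k` topplings of the scheme `T`. -/
def config (d : ℕ) (p : ℝ) (ν₀ : LatZ d → ℝ) (T : ℕ → LatZ d) : ℕ → LatZ d → ℝ
  | 0 => ν₀
  | k + 1 => topple d p (config d p ν₀ T k) (T k)

/-- Mass emitted from a site `x` when it is toppled in configuration `ν`. -/
def emitted (d : ℕ) (ν : LatZ d → ℝ) (x : LatZ d) : ℝ := if 1 ≤ ν x then ν x - 1 else 0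

/-- The odometer after `k` topplings: total mass emitted from `x` so far. -/
def odom (d : ℕ) (p : ℝ) (ν₀ : LatZ d → ℝ) (T : ℕ → LatZ d) (k : ℕ) (x : LatZ d) : ℝ :=
  ∑ j ∈ Finset.range k, if T j = x then emitted d (config d p ν₀ T j) x else 0

/-- A toppling scheme: every site that is full at some stage occurs infinitely often
afterwards in the sequence. -/
def IsScheme (d : ℕ) (p : ℝ) (ν₀ : LatZ d → ℝ) (T : ℕ → LatZ d) : Prop :=
  ∀ k x, 1 ≤ config d p ν₀ T k x → ∀ m, ∃ j, m ≤ j ∧ T j = x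

/-- A legal scheme only topples full sites. -/
def IsLegal (d : ℕ) (p : ℝ) (ν₀ : LatZ d → ℝ) (T : ℕ → LatZ d) : Prop :=
  ∀ k, 1 ≤ config d p ν₀ T k (T k)

/-- The discrete heat operator 𝒦. -/
def Kop (d : ℕ) (p : ℝ) (f : LatZ d → ℝ) (x : LatZ d) : ℝ :=
  ((1 - p) / (2 * ((d : ℝ) - 1))) *
    ∑ i : Fin (d-1),
      ((f (Function.update x.1 i (x.1 i + 1), x.2) - f x) +
       (f (Function.update x.1 i (x.1 i - 1), x.2) - f x))
  - p * (f x - f (x.1, x.2 - 1))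

end
section Aux

lemma update_shift_eq_iff {n : ℕ} (f g : Fin n → ℤ) (i : Fin n) (a : ℤ) :
    Function.update f i (f i + a) = g ↔ f = Function.update g i (g i - a) := by
  constructor
  · rintro rfl
    ext j
    rcases eq_or_ne j i with rfl | h
    · simp
    · simp [Function.update_of_ne h]
  · rintro rfl
    ext j
    rcases eq_or_ne j i with rfl | h
    · simp
    · simp [Function.update_of_ne h]

lemma Kop_add_mul (d : ℕ) (p : ℝ) (f g : LatZ d → ℝ) (a : ℝ) (y : LatZ d) :
    Kop d p (fun z => f z + a * g z) y = Kop d p f y + a * Kop d p g y := by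
  simp only [Kop]
  have hs : ∑ i : Fin (d-1),
      ((f (Function.update y.1 i (y.1 i + 1), y.2) + a * g (Function.update y.1 i (y.1 i + 1), y.2)
          - (f y + a * g y)) +
       (f (Function.update y.1 i (y.1 i - 1), y.2) + a * g (Function.update y.1 i (y.1 i - 1), y.2)
          - (f y + a * g y)))
      = (∑ i : Fin (d-1),
          ((f (Function.update y.1 i (y.1 i + 1), y.2) - f y) +
           (f (Function.update y.1 i (y.1 i - 1), y.2) - f y)))
        + a * (∑ i : Fin (d-1),
          ((g (Function.update y.1 i (y.1 i + 1), y.2) - g y) +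
           (g (Function.update y.1 i (y.1 i - 1), y.2) - g y))) := by
    rw [Finset.mul_sum, ← Finset.sum_add_distrib]
    exact Finset.sum_congr rfl fun i _ => by ring
  rw [hs]; ring

end Aux
section Aux2

lemma dm1_ne (d : ℕ) (hd : 2 ≤ d) : ((d:ℝ) - 1) ≠ 0 := by
  have : (2:ℝ) ≤ (d:ℝ) := by exact_mod_cast hd
  intro h; nlinarith

lemma card_fin_cast (d : ℕ) (hd : 2 ≤ d) : ((d - 1 : ℕ) : ℝ) = (d:ℝ) - 1 := by
  have h1 : 1 ≤ d := le_trans (by norm_num) hd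
  push_cast [Nat.cast_sub h1]
  ring

lemma Kop_indicator (d : ℕ) (hd : 2 ≤ d) (p : ℝ) (t y : LatZ d) :
    Kop d p (fun z => if z = t then (1:ℝ) else 0) y
      = nbrWeight d p t y - (if y = t then 1 else 0) := by
  have e1 : ∀ i : Fin (d-1),
      (if (Function.update y.1 i (y.1 i + 1), y.2) = t then (1:ℝ) else 0)
      = (if y = (Function.update t.1 i (t.1 i - 1), t.2) then (1:ℝ) else 0) := by
    intro i
    refine if_congr ?_ rfl rfl
    rw [Prod.ext_iff, Prod.ext_iff]
    simp only [update_shift_eq_iff y.1 t.1 i 1]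
  have e2 : ∀ i : Fin (d-1),
      (if (Function.update y.1 i (y.1 i - 1), y.2) = t then (1:ℝ) else 0)
      = (if y = (Function.update t.1 i (t.1 i + 1), t.2) then (1:ℝ) else 0) := by
    intro i
    refine if_congr ?_ rfl rfl
    rw [Prod.ext_iff, Prod.ext_iff]
    have h := update_shift_eq_iff y.1 t.1 i (-1)
    simp only [← sub_eq_add_neg, sub_neg_eq_add] at h
    rw [h]
  have e3 : (if (y.1, y.2 - 1) = t then (1:ℝ) else 0)
      = (if y = (t.1, t.2 + 1) then (1:ℝ) else 0) := by
    refine if_congr ?_ rfl rfl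
    simp only [Prod.ext_iff]
    constructor
    · rintro ⟨h1, h2⟩; exact ⟨h1, by omega⟩
    · rintro ⟨h1, h2⟩; exact ⟨h1, by omega⟩
  simp only [Kop, nbrWeight, e1, e2, e3]
  set χ : ℝ := if y = t then (1:ℝ) else 0 with hχ
  have hd1 : ((d:ℝ) - 1) ≠ 0 := dm1_ne d hd
  have hconst : ∑ _i : Fin (d-1), (2*χ) = ((d:ℝ) - 1) * (2*χ) := by
    rw [Finset.sum_const, Finset.card_univ, Fintype.card_fin, nsmul_eq_mul, card_fin_cast d hd]
  have hsum : ∑ i : Fin (d-1),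
      (((if y = (Function.update t.1 i (t.1 i - 1), t.2) then (1:ℝ) else 0) - χ) +
       ((if y = (Function.update t.1 i (t.1 i + 1), t.2) then (1:ℝ) else 0) - χ))
      = (∑ i : Fin (d-1),
          ((if y = (Function.update t.1 i (t.1 i + 1), t.2) then (1:ℝ) else 0) +
           (if y = (Function.update t.1 i (t.1 i - 1), t.2) then (1:ℝ) else 0)))
        - ((d:ℝ) - 1) * (2 * χ) := by
    rw [← hconst, ← Finset.sum_sub_distrib]
    exact Finset.sum_congr rfl fun i _ => by ring
  rw [hsum]
  have hp2 : (if y = (t.1, t.2 + 1) then p else 0)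
      = p * (if y = (t.1, t.2 + 1) then (1:ℝ) else 0) := by
    split <;> ring
  rw [hp2, mul_sub]
  have hmm : ((1 - p) / (2 * ((d:ℝ) - 1))) * (((d:ℝ) - 1) * (2 * χ)) = (1 - p) * χ := by
    field_simp
  rw [hmm]
  ring

/-- `f x + Kop f x` equals the weighted average of neighbor values. -/
lemma Kop_in (d : ℕ) (hd : 2 ≤ d) (p : ℝ) (f : LatZ d → ℝ) (x : LatZ d) :
    f x + Kop d p f x
      = ((1 - p) / (2 * ((d:ℝ) - 1))) *
          ∑ i : Fin (d-1),
            (f (Function.update x.1 i (x.1 i + 1), x.2) +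
             f (Function.update x.1 i (x.1 i - 1), x.2))
        + p * f (x.1, x.2 - 1) := by
  have hd1 : ((d:ℝ) - 1) ≠ 0 := dm1_ne d hd
  have hconst : ∑ _i : Fin (d-1), (2 * f x) = ((d:ℝ) - 1) * (2 * f x) := by
    rw [Finset.sum_const, Finset.card_univ, Fintype.card_fin, nsmul_eq_mul, card_fin_cast d hd]
  have hsum : ∑ i : Fin (d-1),
      ((f (Function.update x.1 i (x.1 i + 1), x.2) - f x) +
       (f (Function.update x.1 i (x.1 i - 1), x.2) - f x))
      = (∑ i : Fin (d-1),
          (f (Function.update x.1 i (x.1 i + 1), x.2) +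
           f (Function.update x.1 i (x.1 i - 1), x.2)))
        - ((d:ℝ) - 1) * (2 * f x) := by
    rw [← hconst, ← Finset.sum_sub_distrib]
    exact Finset.sum_congr rfl fun i _ => by ring
  rw [Kop, hsum, mul_sub]
  have hmm : ((1 - p) / (2 * ((d:ℝ) - 1))) * (((d:ℝ) - 1) * (2 * f x)) = (1 - p) * f x := by
    field_simp
  rw [hmm]
  ring

end Aux2
section Aux3

lemma odom_succ (d : ℕ) (p : ℝ) (ν₀ : LatZ d → ℝ) (T : ℕ → LatZ d) (k : ℕ) (x : LatZ d) :
    odom d p ν₀ T (k+1) x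
      = odom d p ν₀ T k x + (if T k = x then emitted d (config d p ν₀ T k) x else 0) := by
  simp [odom, Finset.sum_range_succ]

lemma emitted_nonneg (d : ℕ) (ν : LatZ d → ℝ) (x : LatZ d) : 0 ≤ emitted d ν x := by
  unfold emitted; split <;> linarith

lemma odom_mono (d : ℕ) (p : ℝ) (ν₀ : LatZ d → ℝ) (T : ℕ → LatZ d) (x : LatZ d) :
    Monotone fun k => odom d p ν₀ T k x := by
  apply monotone_nat_of_le_succ
  intro k
  rw [odom_succ]
  have : 0 ≤ (if T k = x then emitted d (config d p ν₀ T k) x else 0) := by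
    split
    · exact emitted_nonneg _ _ _
    · exact le_rfl
  linarith

lemma mass_identity (d : ℕ) (hd : 2 ≤ d) (p : ℝ) (ν₀ : LatZ d → ℝ) (T : ℕ → LatZ d) :
    ∀ k x, config d p ν₀ T k x = ν₀ x + Kop d p (odom d p ν₀ T k) x := by
  intro k
  induction k with
  | zero =>
    intro x
    have h0 : odom d p ν₀ T 0 = fun _ => (0:ℝ) := funext fun x => by simp [odom]
    rw [h0]
    simp [config, Kop]
  | succ k ih =>
    intro x
    by_cases h : 1 ≤ config d p ν₀ T k (T k)
    · have hod : odom d p ν₀ T (k+1)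
          = fun z => odom d p ν₀ T k z
            + (config d p ν₀ T k (T k) - 1) * (if z = T k then (1:ℝ) else 0) := by
        funext z
        rw [odom_succ]
        by_cases hz : T k = z
        · subst hz
          simp [emitted, h]
        · simp [hz, Ne.symm hz]
      rw [hod, show config d p ν₀ T (k+1) = topple d p (config d p ν₀ T k) (T k) from rfl,
        topple, if_pos h, Kop_add_mul, Kop_indicator d hd]
      rw [← add_assoc, ← ih x]
      by_cases hx : x = T k
      · subst hx; simp; ring
      · simp only [if_neg hx]; ring
    · have hod : odom d p ν₀ T (k+1) = odom d p ν₀ T k := by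
        funext z
        rw [odom_succ]
        by_cases hz : T k = z
        · subst hz; simp [emitted, h]
        · simp [hz]
      rw [hod, show config d p ν₀ T (k+1) = topple d p (config d p ν₀ T k) (T k) from rfl,
        topple, if_neg h]
      exact ih x

end Aux3
section Aux4

lemma least_action (d : ℕ) (hd : 2 ≤ d) (p : ℝ) (hp0 : 0 ≤ p) (hp1 : p ≤ 1)
    (ν₀ : LatZ d → ℝ) (T : ℕ → LatZ d) (w : LatZ d → ℝ)
    (hw0 : ∀ x, 0 ≤ w x) (hw : ∀ x, ν₀ x + Kop d p w x ≤ 1) :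
    ∀ k x, odom d p ν₀ T k x ≤ w x := by
  intro k
  induction k with
  | zero => intro x; simpa [odom] using hw0 x
  | succ k ih =>
    intro x
    rw [odom_succ]
    by_cases h : T k = x
    · rw [if_pos h]
      by_cases hf : 1 ≤ config d p ν₀ T k x
      · rw [emitted, if_pos hf]
        have hmass := mass_identity d hd p ν₀ T k x
        have hc : 0 ≤ (1 - p) / (2 * ((d:ℝ) - 1)) := by
          have h2 : (2:ℝ) ≤ (d:ℝ) := by exact_mod_cast hd
          apply div_nonneg <;> linarith
        have hsum : ∑ i : Fin (d-1),
            (odom d p ν₀ T k (Function.update x.1 i (x.1 i + 1), x.2) +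
             odom d p ν₀ T k (Function.update x.1 i (x.1 i - 1), x.2))
            ≤ ∑ i : Fin (d-1),
            (w (Function.update x.1 i (x.1 i + 1), x.2) +
             w (Function.update x.1 i (x.1 i - 1), x.2)) :=
          Finset.sum_le_sum fun i _ => add_le_add (ih _) (ih _)
        have key : odom d p ν₀ T k x + Kop d p (odom d p ν₀ T k) x
            ≤ w x + Kop d p w x := by
          rw [Kop_in d hd, Kop_in d hd]
          exact add_le_add (mul_le_mul_of_nonneg_left hsum hc)
            (mul_le_mul_of_nonneg_left (ih _) hp0)
        have hw' := hw x
        rw [hmass]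
        linarith
      · rw [emitted, if_neg hf]
        simpa using ih x
    · rw [if_neg h]
      simpa using ih x

end Aux4
section Aux5

lemma exists_bound (d : ℕ) (hd : 2 ≤ d) (p : ℝ) (hp : p ∈ Set.Ioo (0:ℝ) 1)
    (ν₀ : LatZ d → ℝ) (h0 : ∀ x, 0 ≤ ν₀ x) (hsupp : (Function.support ν₀).Finite) :
    ∃ w : LatZ d → ℝ, (∀ x, 0 ≤ w x) ∧ (∀ x, ν₀ x + Kop d p w x ≤ 1) := by
  obtain ⟨hp0, hp1⟩ := hp
  set S : Finset (LatZ d) := hsupp.toFinset with hS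
  set C : ℝ := ∑ x ∈ S, ν₀ x with hC
  have hC0 : 0 ≤ C := Finset.sum_nonneg fun x _ => h0 x
  have hCb : ∀ x, ν₀ x ≤ C := by
    intro x
    by_cases hx : x ∈ S
    · exact Finset.single_le_sum (fun y _ => h0 y) hx
    · have : ν₀ x = 0 := by
        by_contra hne
        exact hx (by simpa [hS, Set.Finite.mem_toFinset, Function.mem_support] using hne)
      rw [this]; exact hC0
  set S₂ : Finset ℤ := S.image Prod.snd with hS₂
  set g : ℤ → ℝ := fun n => (C / p) * ((S₂.filter (fun m => m ≤ n)).card : ℝ) with hg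
  have hcard : ∀ n : ℤ, (S₂.filter (fun m => m ≤ n)).card
      = (S₂.filter (fun m => m ≤ n - 1)).card + (if n ∈ S₂ then 1 else 0) := by
    intro n
    have hun : S₂.filter (fun m => m ≤ n)
        = S₂.filter (fun m => m ≤ n - 1) ∪ S₂.filter (fun m => m = n) := by
      ext m
      simp only [Finset.mem_filter, Finset.mem_union]
      by_cases hm : m ∈ S₂ <;> simp [hm] <;> omega
    have hdisj : Disjoint (S₂.filter (fun m => m ≤ n - 1)) (S₂.filter (fun m => m = n)) := by
      rw [Finset.disjoint_filter]
      intro m _ hle hme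
      omega
    rw [hun, Finset.card_union_of_disjoint hdisj]
    congr 1
    rw [Finset.filter_eq']
    split <;> simp_all
  have hgd : ∀ n : ℤ, g n - g (n - 1) = (C / p) * (if n ∈ S₂ then 1 else 0) := by
    intro n
    rw [hg]
    simp only
    rw [hcard n]
    push_cast
    split <;> ring
  have hKw : ∀ x : LatZ d, Kop d p (fun z => g z.2) x = - (p * (g x.2 - g (x.2 - 1))) := by
    intro x
    rw [Kop]
    simp only [sub_self, add_zero, Finset.sum_const, smul_zero, mul_zero, zero_sub, neg_mul]
  refine ⟨fun x => g x.2, ?_, ?_⟩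
  · intro x
    apply mul_nonneg (div_nonneg hC0 (le_of_lt hp0))
    exact Nat.cast_nonneg _
  · intro x
    rw [hKw x, hgd x.2]
    by_cases hx2 : x.2 ∈ S₂
    · rw [if_pos hx2]
      have : p * (C / p * 1) = C := by field_simp
      have := hCb x
      nlinarith [hCb x]
    · rw [if_neg hx2]
      have hx0 : ν₀ x = 0 := by
        by_contra hne
        apply hx2
        rw [hS₂]
        exact Finset.mem_image.2 ⟨x, by simpa [hS, Set.Finite.mem_toFinset, Function.mem_support] using hne, rfl⟩
      rw [hx0]
      norm_num
end Aux5
theorem unfair_divisible_sandpile_converges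
    (d : ℕ) (hd : 2 ≤ d) (p : ℝ) (hp : p ∈ Set.Ioo (0:ℝ) 1)
    (ν₀ : LatZ d → ℝ) (h0 : ∀ x, 0 ≤ ν₀ x) (hsupp : (Function.support ν₀).Finite)
    (T : ℕ → LatZ d) (hT : IsScheme d p ν₀ T) (hL : IsLegal d p ν₀ T) :
    ∃ u ν : LatZ d → ℝ,
      (∀ x, Tendsto (fun k => odom d p ν₀ T k x) atTop (nhds (u x))) ∧
      (∀ x, Tendsto (fun k => config d p ν₀ T k x) atTop (nhds (ν x))) ∧
      (∀ x, ν x ≤ 1) ∧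
      (∀ x, ν x = ν₀ x + Kop d p u x) := by
  obtain ⟨hp0, hp1⟩ := hp
  obtain ⟨w, hw0, hw⟩ := exists_bound d hd p ⟨hp0, hp1⟩ ν₀ h0 hsupp
  have hbd : ∀ k x, odom d p ν₀ T k x ≤ w x :=
    least_action d hd p (le_of_lt hp0) (le_of_lt hp1) ν₀ T w hw0 hw
  have hbdd : ∀ x, BddAbove (Set.range fun k => odom d p ν₀ T k x) := fun x =>
    ⟨w x, by rintro r ⟨k, rfl⟩; exact hbd k x⟩
  obtain ⟨u, hu⟩ : ∃ u : LatZ d → ℝ, u = fun x => ⨆ k, odom d p ν₀ T k x := ⟨_, rfl⟩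
  have hut : ∀ x, Tendsto (fun k => odom d p ν₀ T k x) atTop (nhds (u x)) := fun x => by
    rw [hu]; exact tendsto_atTop_ciSup (odom_mono d p ν₀ T x) (hbdd x)
  have hule : ∀ k x, odom d p ν₀ T k x ≤ u x := fun k x => by
    rw [hu]; exact le_ciSup (hbdd x) k
  obtain ⟨ν, hν⟩ : ∃ ν : LatZ d → ℝ, ν = fun x => ν₀ x + Kop d p u x := ⟨_, rfl⟩
  have hKt : ∀ x, Tendsto (fun k => Kop d p (odom d p ν₀ T k) x) atTop
      (nhds (Kop d p u x)) := by
    intro x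
    simp only [Kop]
    apply Tendsto.sub
    · apply Tendsto.const_mul
      apply tendsto_finset_sum
      intro i _
      exact ((hut _).sub (hut x)).add ((hut _).sub (hut x))
    · exact ((hut x).sub (hut _)).const_mul p
  have hνt : ∀ x, Tendsto (fun k => config d p ν₀ T k x) atTop (nhds (ν x)) := by
    intro x
    have he : (fun k => config d p ν₀ T k x)
        = fun k => ν₀ x + Kop d p (odom d p ν₀ T k) x :=
      funext fun k => mass_identity d hd p ν₀ T k x
    rw [he, hν]
    exact tendsto_const_nhds.add (hKt x)
  refine ⟨u, ν, hut, hνt, ?_, fun x => by rw [hν]⟩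
  intro x
  by_contra hgt
  push_neg at hgt
  have h1 : ∀ᶠ k in atTop, (1 + ν x)/2 < config d p ν₀ T k x :=
    (hνt x).eventually (eventually_gt_nhds (by linarith))
  have h2 : ∀ᶠ k in atTop, u x - (ν x - 1)/2 < odom d p ν₀ T k x :=
    (hut x).eventually (eventually_gt_nhds (by linarith))
  rw [eventually_atTop] at h1 h2
  obtain ⟨K1, hK1⟩ := h1
  obtain ⟨K2, hK2⟩ := h2
  set K := max K1 K2 with hK
  have hfull : 1 ≤ config d p ν₀ T K x := by
    have := hK1 K (le_max_left _ _)
    linarith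
  obtain ⟨j, hjK, hjx⟩ := hT K x hfull K
  have hjfull : (1 + ν x)/2 < config d p ν₀ T j x :=
    hK1 j (le_trans (le_max_left _ _) hjK)
  have hstep : odom d p ν₀ T (j+1) x = odom d p ν₀ T j x + (config d p ν₀ T j x - 1) := by
    rw [odom_succ, if_pos hjx, emitted, if_pos (by linarith)]
  have hmono : odom d p ν₀ T K x ≤ odom d p ν₀ T j x := odom_mono d p ν₀ T x hjK
  have hKlow : u x - (ν x - 1)/2 < odom d p ν₀ T K x := hK2 K (le_max_right _ _)
  have := hule (j+1) x
  rw [hstep] at this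
  linarith
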